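/- Suppose no inner knot has multiplicity greater than m (m ≥ 1), fix j with 0 ≤ j ≤ n−1 such that t_j < t_{j+1}, and let i satisfy j − m < i < j. Then the adjusted Bernstein–Bézier coefficients of N_{m,i} and N_{m,i+1} over the knot span [t_j, t_{j+1}) satisfy, for every k = 0, 1, …, m−1: b_{m,k}^{(i,j)} = ((t_j − t_i)/(t_{j+1} − t_i))·b_{m,k+1}^{(i,j)} + (v_{mi}/(t_{j+1} − t_i))·( (t_{j+1} − t_{m+i+2})·b_{m,k}^{(i+1,j)} + (t_{m+i+2} − t_j)·b_{m,k+1}^{(i+1,j)} ), where v_{mi} = (t_{m+i+1} − t_i)/(t_{m+i+2} − t_{i+1}). -/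

import Mathlib

/-- The B-spline basis functions `N_{p,i}` of degree `p` over the knot
sequence `t`, defined by the de Boor–Cox recursion, with the conventions that
a fraction with vanishing denominator is replaced by `0` (automatic for real
division in Lean) and that `N_{p,q} ≡ 0` whenever `q < -p` or `q ≥ n`. -/
noncomputable def bspline (t : ℤ → ℝ) (n : ℕ) : ℕ → ℤ → ℝ → ℝ
  | 0 => fun i u =>
      if 0 ≤ i ∧ i < (n : ℤ) ∧ t i ≤ u ∧ u < t (i + 1) then 1 else 0
  | p + 1 => fun i u =>
      if -((p : ℤ) + 1) ≤ i ∧ i < (n : ℤ) then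
        (u - t i) / (t ((p : ℤ) + 1 + i) - t i) * bspline t n p i u
          + (t ((p : ℤ) + 1 + i + 1) - u) / (t ((p : ℤ) + 1 + i + 1) - t (i + 1))
              * bspline t n p (i + 1) u
      else 0

/-- The `k`-th Bernstein basis polynomial of degree `p`. -/
noncomputable def bern (p k : ℕ) (x : ℝ) : ℝ :=
  (p.choose k : ℝ) * x ^ k * (1 - x) ^ (p - k)

namespace BSplineAux

open Polynomial

/- ### Bernstein polynomial lemmas -/

theorem bern_eval (p k : ℕ) (x : ℝ) : (bernsteinPolynomial ℝ p k).eval x = bern p k x := by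
  simp [bernsteinPolynomial, bern]

theorem bern_rec0 (q : ℕ) :
    bernsteinPolynomial ℝ (q+1) 0 = (1 - X) * bernsteinPolynomial ℝ q 0 := by
  simp [bernsteinPolynomial, pow_succ]
  ring

theorem bern_rec (q k : ℕ) (hk : k ≤ q) :
    bernsteinPolynomial ℝ (q+1) (k+1)
      = X * bernsteinPolynomial ℝ q k + (1 - X) * bernsteinPolynomial ℝ q (k+1) := by
  rcases eq_or_lt_of_le hk with rfl | hlt
  · rw [bernsteinPolynomial.eq_zero_of_lt (R := ℝ) (Nat.lt_succ_self k)]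
    simp [bernsteinPolynomial, pow_succ]
    ring
  · unfold bernsteinPolynomial
    rw [Nat.choose_succ_succ]
    have e1 : q + 1 - (k+1) = q - k := by omega
    have e2 : q - k = (q - (k+1)) + 1 := by omega
    rw [e1, e2, pow_succ, pow_succ]
    push_cast
    ring

theorem bernL1 (q k : ℕ) (hk : k ≤ q + 1) :
    ((q : Polynomial ℝ) + 1) * bernsteinPolynomial ℝ (q+1) k
        - X * derivative (bernsteinPolynomial ℝ (q+1) k)
      = ((q : Polynomial ℝ) + 1) * bernsteinPolynomial ℝ q k := by
  cases k with
  | zero =>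
    rw [bernsteinPolynomial.derivative_zero]
    have := bern_rec0 q
    push_cast
    try simp only [Nat.add_sub_cancel]
    linear_combination ((q : Polynomial ℝ) + 1) * this
  | succ k =>
    rw [bernsteinPolynomial.derivative_succ]
    have := bern_rec q k (by omega)
    push_cast
    try simp only [Nat.add_sub_cancel]
    linear_combination ((q : Polynomial ℝ) + 1) * this

theorem bernL2 (q k : ℕ) (hk : k ≤ q) :
    ((q : Polynomial ℝ) + 1) * bernsteinPolynomial ℝ (q+1) (k+1)
        + (1 - X) * derivative (bernsteinPolynomial ℝ (q+1) (k+1))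
      = ((q : Polynomial ℝ) + 1) * bernsteinPolynomial ℝ q k := by
  rw [bernsteinPolynomial.derivative_succ]
  have := bern_rec q k hk
  push_cast
  try simp only [Nat.add_sub_cancel]
  linear_combination ((q : Polynomial ℝ) + 1) * this

theorem bernL2z (q : ℕ) :
    ((q : Polynomial ℝ) + 1) * bernsteinPolynomial ℝ (q+1) 0
        + (1 - X) * derivative (bernsteinPolynomial ℝ (q+1) 0) = 0 := by
  rw [bernsteinPolynomial.derivative_zero]
  have := bern_rec0 q
  push_cast
  try simp only [Nat.add_sub_cancel]
  linear_combination ((q : Polynomial ℝ) + 1) * this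

theorem bernF1 (q : ℕ) (c : ℕ → ℝ) :
    ((q : Polynomial ℝ) + 1) * (∑ k ∈ Finset.range (q+2), C (c k) * bernsteinPolynomial ℝ (q+1) k)
        - X * derivative (∑ k ∈ Finset.range (q+2), C (c k) * bernsteinPolynomial ℝ (q+1) k)
      = ((q : Polynomial ℝ) + 1) * ∑ k ∈ Finset.range (q+1), C (c k) * bernsteinPolynomial ℝ q k := by
  rw [derivative_sum, Finset.mul_sum, Finset.mul_sum, Finset.mul_sum]
  rw [← Finset.sum_sub_distrib]
  have : ∀ k ∈ Finset.range (q+2),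
      ((q : Polynomial ℝ)+1) * (C (c k) * bernsteinPolynomial ℝ (q+1) k)
        - X * derivative (C (c k) * bernsteinPolynomial ℝ (q+1) k)
      = C (c k) * (((q : Polynomial ℝ)+1) * bernsteinPolynomial ℝ q k) := by
    intro k hk
    rw [derivative_C_mul]
    have := bernL1 q k (by simp at hk; omega)
    linear_combination C (c k) * this
  rw [Finset.sum_congr rfl this]
  rw [Finset.sum_range_succ, bernsteinPolynomial.eq_zero_of_lt (R := ℝ) (Nat.lt_succ_self q)]
  simp only [mul_zero, add_zero]
  apply Finset.sum_congr rfl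
  intro k hk
  ring

theorem bernF2 (q : ℕ) (c : ℕ → ℝ) :
    ((q : Polynomial ℝ) + 1) * (∑ k ∈ Finset.range (q+2), C (c k) * bernsteinPolynomial ℝ (q+1) k)
        + (1 - X) * derivative (∑ k ∈ Finset.range (q+2), C (c k) * bernsteinPolynomial ℝ (q+1) k)
      = ((q : Polynomial ℝ) + 1) * ∑ k ∈ Finset.range (q+1), C (c (k+1)) * bernsteinPolynomial ℝ q k := by
  rw [derivative_sum, Finset.mul_sum, Finset.mul_sum, Finset.mul_sum]
  rw [← Finset.sum_add_distrib]
  have : ∀ k ∈ Finset.range (q+2),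
      ((q : Polynomial ℝ)+1) * (C (c k) * bernsteinPolynomial ℝ (q+1) k)
        + (1 - X) * derivative (C (c k) * bernsteinPolynomial ℝ (q+1) k)
      = C (c k) * (((q : Polynomial ℝ)+1) * bernsteinPolynomial ℝ (q+1) k
          + (1 - X) * derivative (bernsteinPolynomial ℝ (q+1) k)) := by
    intro k hk
    rw [derivative_C_mul]; ring
  rw [Finset.sum_congr rfl this]
  rw [Finset.sum_range_succ']
  rw [bernL2z]
  simp only [mul_zero, add_zero]
  apply Finset.sum_congr rfl
  intro k hk
  rw [bernL2 q k (by simp at hk; omega)]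
  ring

theorem it_der_sum (k : ℕ) (s : Finset ℕ) (f : ℕ → Polynomial ℝ) :
    derivative^[k] (∑ i ∈ s, f i) = ∑ i ∈ s, derivative^[k] (f i) := by
  induction k with
  | zero => simp
  | succ k ih =>
    rw [Function.iterate_succ_apply', ih, map_sum]
    exact Finset.sum_congr rfl fun i _ => (Function.iterate_succ_apply' _ _ _).symm

theorem bern_extract (p N : ℕ) (hN : N ≤ p + 1) (c : ℕ → ℝ)
    (h : ∑ k ∈ Finset.range N, C (c k) * bernsteinPolynomial ℝ p k = 0) :
    ∀ k, k < N → c k = 0 := by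
  intro k
  induction k using Nat.strong_induction_on with
  | _ k ih =>
    intro hkN
    have hev := congrArg (fun q => (Polynomial.derivative^[k] q).eval 0) h
    simp only [it_der_sum, Polynomial.iterate_derivative_C_mul, eval_finset_sum, eval_mul,
      eval_C, Function.iterate_fixed, map_zero, eval_zero] at hev
    rw [Finset.sum_eq_single k] at hev
    · have hne : (derivative^[k] (bernsteinPolynomial ℝ p k)).eval 0 ≠ 0 :=
        bernsteinPolynomial.iterate_derivative_at_0_ne_zero ℝ p k (by omega)
      exact (mul_eq_zero.mp hev).resolve_right hne
    · intro i hi hik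
      rcases lt_or_gt_of_ne hik with hlt | hgt
      · rw [ih i hlt (by simp at hi; omega)]; ring
      · rw [bernsteinPolynomial.iterate_derivative_at_0_eq_zero_of_lt ℝ p hgt]; ring
    · intro hk; exact absurd hkN (by simpa using hk)

theorem sum_merge (q : ℕ) (W V h d1 d2 : ℝ) (c c' : ℕ → ℝ) :
    C W * (C h * (((q : Polynomial ℝ) + 1)
            * ∑ k ∈ Finset.range (q+1), C (c k) * bernsteinPolynomial ℝ q k)
        - C d1 * ((((q : Polynomial ℝ) + 1)
              * ∑ k ∈ Finset.range (q+1), C (c (k+1)) * bernsteinPolynomial ℝ q k)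
            - ((q : Polynomial ℝ) + 1)
              * ∑ k ∈ Finset.range (q+1), C (c k) * bernsteinPolynomial ℝ q k))
      - C V * (C h * (((q : Polynomial ℝ) + 1)
            * ∑ k ∈ Finset.range (q+1), C (c' k) * bernsteinPolynomial ℝ q k)
        + C d2 * ((((q : Polynomial ℝ) + 1)
              * ∑ k ∈ Finset.range (q+1), C (c' (k+1)) * bernsteinPolynomial ℝ q k)
            - ((q : Polynomial ℝ) + 1)
              * ∑ k ∈ Finset.range (q+1), C (c' k) * bernsteinPolynomial ℝ q k))
    = ∑ k ∈ Finset.range (q+1),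
        C (((q : ℝ) + 1) * (W * (h * c k - d1 * (c (k+1) - c k))
            - V * (h * c' k + d2 * (c' (k+1) - c' k)))) * bernsteinPolynomial ℝ q k := by
  simp only [Finset.mul_sum, ← Finset.sum_sub_distrib, ← Finset.sum_add_distrib]
  apply Finset.sum_congr rfl
  intro k hk
  simp only [map_add, map_sub, map_mul, map_one, map_natCast]
  ring

/- ### The local polynomial of a B-spline over a fixed knot span -/

variable (t : ℤ → ℝ) (n m : ℕ) (j : ℤ)

noncomputable def Bpoly : ℕ → ℤ → Polynomial ℝ
  | 0, l => if l = j then 1 else 0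
  | (p+1), l =>
      if -((p : ℤ) + 1) ≤ l ∧ l < (n : ℤ) then
        C ((t ((p : ℤ) + 1 + l) - t l)⁻¹) * (X - C (t l)) * Bpoly p l
          + C ((t ((p : ℤ) + 1 + l + 1) - t (l + 1))⁻¹)
              * (C (t ((p : ℤ) + 1 + l + 1)) - X) * Bpoly p (l + 1)
      else 0

theorem Bpoly_support : ∀ (p : ℕ) (l : ℤ), (j < l ∨ l + p < j) → Bpoly t n j p l = 0 := by
  intro p
  induction p with
  | zero =>
    intro l h
    have : l ≠ j := by omega
    simp [Bpoly, this]
  | succ p ih =>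
    intro l h
    have h1 : Bpoly t n j p l = 0 := ih l (by omega)
    have h2 : Bpoly t n j p (l+1) = 0 := ih (l+1) (by omega)
    simp [Bpoly, h1, h2]

theorem Bpoly_rec (hj1 : 0 ≤ j) (hj2 : j < (n : ℤ)) (p : ℕ) (l : ℤ) :
    Bpoly t n j (p+1) l =
      C ((t ((p : ℤ) + 1 + l) - t l)⁻¹) * (X - C (t l)) * Bpoly t n j p l
        + C ((t ((p : ℤ) + 1 + l + 1) - t (l + 1))⁻¹)
            * (C (t ((p : ℤ) + 1 + l + 1)) - X) * Bpoly t n j p (l + 1) := by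
  by_cases hc : -((p : ℤ) + 1) ≤ l ∧ l < (n : ℤ)
  · rw [Bpoly, if_pos hc]
  · rw [Bpoly, if_neg hc]
    have h1 : Bpoly t n j p l = 0 := by apply Bpoly_support; omega
    have h2 : Bpoly t n j p (l+1) = 0 := by apply Bpoly_support; omega
    simp [h1, h2]

theorem Bpoly_deriv_deg0 (l : ℤ) : derivative (Bpoly t n j 0 l) = 0 := by
  rw [Bpoly]
  split <;> simp

variable (hmono : ∀ k l : ℤ, -(m : ℤ) ≤ k → k ≤ l → l ≤ (n : ℤ) + m → t k ≤ t l)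
variable (hj1 : 0 ≤ j) (hj2 : j ≤ (n : ℤ) - 1) (hspan : t j < t (j + 1))

include hmono hj1 hj2 hspan in
theorem Bpoly_zero_of_collapse (q : ℕ) (l : ℤ) (hl1 : -(m : ℤ) ≤ l)
    (hl2 : l + q + 1 ≤ (n : ℤ) + m) (hcol : t l = t (l + q + 1)) :
    Bpoly t n j q l = 0 := by
  by_cases hs : j < l ∨ l + q < j
  · exact Bpoly_support t n j q l hs
  · exfalso
    have h1 : t l ≤ t j := hmono l j hl1 (by omega) (by omega)
    have h2 : t (j+1) ≤ t (l + q + 1) := hmono (j+1) (l+q+1) (by omega) (by omega) hl2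
    linarith [hspan]

include hmono hj1 hj2 in
theorem Bpoly_eval (p : ℕ) (l : ℤ) (u : ℝ) (hu1 : t j ≤ u) (hu2 : u < t (j + 1)) :
    (Bpoly t n j p l).eval u = bspline t n p l u := by
  induction p generalizing l with
  | zero =>
    rw [Bpoly, bspline]
    dsimp only
    by_cases hl : l = j
    · subst hl
      rw [if_pos rfl, if_pos ⟨hj1, by omega, hu1, hu2⟩]
      simp
    · rw [if_neg hl, if_neg]
      · simp
      · rintro ⟨h0, hn', h1, h2⟩
        rcases lt_or_gt_of_ne hl with h | h
        · have : t (l+1) ≤ t j := hmono (l+1) j (by omega) (by omega) (by omega)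
          linarith
        · have : t (j+1) ≤ t l := hmono (j+1) l (by omega) (by omega) (by omega)
          linarith
  | succ p ih =>
    rw [Bpoly, bspline]
    dsimp only
    by_cases hc : -((p : ℤ) + 1) ≤ l ∧ l < (n : ℤ)
    · rw [if_pos hc, if_pos ⟨hc.1, hc.2⟩]
      simp only [eval_add, eval_mul, eval_C, eval_sub, eval_X, ih]
      rw [div_eq_inv_mul, div_eq_inv_mul]
    · rw [if_neg hc, if_neg hc]
      simp

include hmono hj1 hj2 hspan in
theorem Bpoly_deriv : ∀ (p : ℕ), p + 1 ≤ m → ∀ (l : ℤ),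
    derivative (Bpoly t n j (p+1) l) =
      ((p : Polynomial ℝ) + 1) * C ((t ((p : ℤ) + 1 + l) - t l)⁻¹) * Bpoly t n j p l
        - ((p : Polynomial ℝ) + 1) * C ((t ((p : ℤ) + 1 + l + 1) - t (l + 1))⁻¹)
            * Bpoly t n j p (l + 1) := by
  have hj2' : j < (n : ℤ) := by omega
  intro p
  induction p with
  | zero =>
    intro _ l
    rw [Bpoly_rec t n j hj1 hj2' 0 l]
    simp only [derivative_add, derivative_mul, derivative_C, derivative_X, derivative_sub,
      Bpoly_deriv_deg0, Nat.cast_zero, Int.ofNat_zero]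
    push_cast
    ring
  | succ p ih =>
    intro hpm l
    have IH := ih (by omega)
    rw [Bpoly_rec t n j hj1 hj2' (p+1) l]
    push_cast
    rw [show (p:ℤ)+1+1+l = l+(p:ℤ)+2 from by ring, show l+(p:ℤ)+2+1 = l+(p:ℤ)+3 from by ring]
    have hA : Bpoly t n j (p+1) l
        = C ((t (l+(p:ℤ)+1) - t l)⁻¹) * (X - C (t l)) * Bpoly t n j p l
          + C ((t (l+(p:ℤ)+2) - t (l+1))⁻¹) * (C (t (l+(p:ℤ)+2)) - X) * Bpoly t n j p (l+1) := by
      rw [Bpoly_rec t n j hj1 hj2' p l, show (p:ℤ)+1+l = l+(p:ℤ)+1 from by ring,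
        show l+(p:ℤ)+1+1 = l+(p:ℤ)+2 from by ring]
    have hB : Bpoly t n j (p+1) (l+1)
        = C ((t (l+(p:ℤ)+2) - t (l+1))⁻¹) * (X - C (t (l+1))) * Bpoly t n j p (l+1)
          + C ((t (l+(p:ℤ)+3) - t (l+2))⁻¹) * (C (t (l+(p:ℤ)+3)) - X) * Bpoly t n j p (l+2) := by
      rw [Bpoly_rec t n j hj1 hj2' p (l+1), show (p:ℤ)+1+(l+1) = l+(p:ℤ)+2 from by ring,
        show l+(p:ℤ)+2+1 = l+(p:ℤ)+3 from by ring, show l+1+1 = l+2 from by ring]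
    have hA' := IH l
    rw [show (p:ℤ)+1+l = l+(p:ℤ)+1 from by ring, show l+(p:ℤ)+1+1 = l+(p:ℤ)+2 from by ring] at hA'
    have hB' := IH (l+1)
    rw [show (p:ℤ)+1+(l+1) = l+(p:ℤ)+2 from by ring, show l+(p:ℤ)+2+1 = l+(p:ℤ)+3 from by ring,
      show l+1+1 = l+2 from by ring] at hB'
    have hKey : ((C (t (l+(p:ℤ)+2)) - C (t l)) * C ((t (l+(p:ℤ)+2) - t l)⁻¹)
          - (C (t (l+(p:ℤ)+3)) - C (t (l+1))) * C ((t (l+(p:ℤ)+3) - t (l+1))⁻¹))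
          * Bpoly t n j p (l+1) = 0 := by
      by_cases hsup : j < l + 1 ∨ l + 1 + (p:ℤ) < j
      · rw [Bpoly_support t n j p (l+1) hsup]; ring
      · by_cases h1 : t (l+(p:ℤ)+2) - t l = 0
        · have hcol : t (l+1) = t (l+1+(p:ℤ)+1) := by
            have e1 : t l ≤ t (l+1) := hmono l (l+1) (by omega) (by omega) (by omega)
            have e2 : t (l+1+(p:ℤ)+1) ≤ t (l+(p:ℤ)+2) := by
              rw [show l+1+(p:ℤ)+1 = l+(p:ℤ)+2 from by ring]
            have e3 : t (l+1) ≤ t (l+1+(p:ℤ)+1) :=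
              hmono (l+1) (l+1+(p:ℤ)+1) (by omega) (by omega) (by omega)
            have := sub_eq_zero.mp h1
            linarith
          have hF : Bpoly t n j p (l+1) = 0 :=
            Bpoly_zero_of_collapse t n m j hmono hj1 hj2 hspan p (l+1) (by omega) (by omega)
              (by rw [hcol])
          rw [hF]; ring
        · by_cases h2 : t (l+(p:ℤ)+3) - t (l+1) = 0
          · have hcol : t (l+1) = t (l+1+(p:ℤ)+1) := by
              have e1 : t (l+1+(p:ℤ)+1) ≤ t (l+(p:ℤ)+3) :=
                hmono (l+1+(p:ℤ)+1) (l+(p:ℤ)+3) (by omega) (by omega) (by omega)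
              have e3 : t (l+1) ≤ t (l+1+(p:ℤ)+1) :=
                hmono (l+1) (l+1+(p:ℤ)+1) (by omega) (by omega) (by omega)
              have := sub_eq_zero.mp h2
              linarith
            have hF : Bpoly t n j p (l+1) = 0 :=
              Bpoly_zero_of_collapse t n m j hmono hj1 hj2 hspan p (l+1) (by omega) (by omega)
                (by rw [hcol])
            rw [hF]; ring
          · have e1 : (C (t (l+(p:ℤ)+2)) - C (t l)) * C ((t (l+(p:ℤ)+2) - t l)⁻¹) = 1 := by
              rw [← C_sub, ← C_mul, mul_inv_cancel₀ h1, C_1]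
            have e2 : (C (t (l+(p:ℤ)+3)) - C (t (l+1))) * C ((t (l+(p:ℤ)+3) - t (l+1))⁻¹) = 1 := by
              rw [← C_sub, ← C_mul, mul_inv_cancel₀ h2, C_1]
            rw [e1, e2]; ring
    simp only [derivative_add, derivative_mul, derivative_C, derivative_X, derivative_sub,
      zero_mul, zero_add, one_mul, mul_one, zero_sub, add_zero]
    rw [hA', hB', hA, hB]
    linear_combination (-((p:Polynomial ℝ)+1)) * C ((t (l+(p:ℤ)+2) - t (l+1))⁻¹) * hKey

include hmono hj1 hj2 hspan in
theorem Bpoly_eq_comp (c : ℕ → ℝ) (l : ℤ) (p : ℕ)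
    (hc : ∀ u ∈ Set.Ico (t j) (t (j + 1)),
      bspline t n p l u
        = ∑ k ∈ Finset.range (p + 1), c k * bern p k ((u - t j) / (t (j + 1) - t j))) :
    Bpoly t n j p l
      = (∑ k ∈ Finset.range (p + 1), C (c k) * bernsteinPolynomial ℝ p k).comp
          (C ((t (j + 1) - t j)⁻¹) * (X - C (t j))) := by
  have hinf : Set.Infinite (Set.Ico (t j) (t (j + 1))) := Set.Ico_infinite hspan
  have hroot : ∀ u ∈ Set.Ico (t j) (t (j + 1)),
      IsRoot (Bpoly t n j p l
        - (∑ k ∈ Finset.range (p + 1), C (c k) * bernsteinPolynomial ℝ p k).comp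
            (C ((t (j + 1) - t j)⁻¹) * (X - C (t j)))) u := by
    intro u hu
    have h1 : (Bpoly t n j p l).eval u = bspline t n p l u :=
      Bpoly_eval t n m j hmono hj1 hj2 p l u hu.1 hu.2
    have h2 : ((∑ k ∈ Finset.range (p + 1), C (c k) * bernsteinPolynomial ℝ p k).comp
        (C ((t (j + 1) - t j)⁻¹) * (X - C (t j)))).eval u
        = ∑ k ∈ Finset.range (p + 1), c k * bern p k ((u - t j) / (t (j + 1) - t j)) := by
      rw [eval_comp, eval_finset_sum]
      simp only [eval_mul, eval_C, eval_sub, eval_X, bern_eval]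
      rw [div_eq_inv_mul]
    simp only [IsRoot, eval_sub, h1, h2, hc u hu, sub_self]
  have hzero : Bpoly t n j p l
      - (∑ k ∈ Finset.range (p + 1), C (c k) * bernsteinPolynomial ℝ p k).comp
          (C ((t (j + 1) - t j)⁻¹) * (X - C (t j))) = 0 := by
    apply Polynomial.eq_zero_of_infinite_isRoot
    apply Set.Infinite.mono _ hinf
    intro u hu
    exact hroot u hu
  exact sub_eq_zero.mp hzero

end BSplineAux

theorem bspline_bezier_coeff_recurrence
    (m n : ℕ) (hm : 1 ≤ m) (hn : 1 ≤ n) (t : ℤ → ℝ)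
    (hmono : ∀ k l : ℤ, -(m : ℤ) ≤ k → k ≤ l → l ≤ (n : ℤ) + m → t k ≤ t l)
    (h0n : t 0 < t n)
    (hmult : ∀ r : ℤ, 1 ≤ r → r ≤ (n : ℤ) - 1 →
      ((Finset.Icc (-(m : ℤ)) ((n : ℤ) + m)).filter (fun k => t k = t r)).card ≤ m)
    (j : ℤ) (hj1 : 0 ≤ j) (hj2 : j ≤ (n : ℤ) - 1) (hspan : t j < t (j + 1))
    (b : ℤ → ℕ → ℝ)
    (hb : ∀ i : ℤ, ∀ u ∈ Set.Ico (t j) (t (j + 1)),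
      bspline t n m i u
        = ∑ k ∈ Finset.range (m + 1),
            b i k * bern m k ((u - t j) / (t (j + 1) - t j)))
    (i : ℤ) (hi1 : j - m < i) (hi2 : i < j)
    (k : ℕ) (hk : k < m) :
    b i k = (t j - t i) / (t (j + 1) - t i) * b i (k + 1)
      + ((t ((m : ℤ) + i + 1) - t i) / (t ((m : ℤ) + i + 2) - t (i + 1)))
          / (t (j + 1) - t i)
          * ((t (j + 1) - t ((m : ℤ) + i + 2)) * b (i + 1) k
              + (t ((m : ℤ) + i + 2) - t j) * b (i + 1) (k + 1)) := by
  classical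
  open Polynomial BSplineAux in
  obtain ⟨q, rfl⟩ : ∃ q, m = q + 1 := ⟨m - 1, by omega⟩
  push_cast at hi1 ⊢
  have hj2' : j < (n : ℤ) := by omega
  -- basic order facts
  have h1 : t i ≤ t j := hmono i j (by push_cast; omega) (by omega) (by push_cast; omega)
  have h2 : t (i+1) ≤ t j := hmono (i+1) j (by push_cast; omega) (by omega) (by push_cast; omega)
  have h3 : t (j+1) ≤ t ((q:ℤ)+1+i+1) :=
    hmono (j+1) ((q:ℤ)+1+i+1) (by push_cast; omega) (by omega) (by push_cast; omega)
  have h4 : t ((q:ℤ)+1+i+1) ≤ t ((q:ℤ)+1+i+2) :=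
    hmono ((q:ℤ)+1+i+1) ((q:ℤ)+1+i+2) (by push_cast; omega) (by omega) (by push_cast; omega)
  have hh0 : t (j+1) - t j ≠ 0 := sub_ne_zero.mpr hspan.ne'
  have hJI : t (j+1) - t i ≠ 0 := sub_ne_zero.mpr (by linarith : t i < t (j+1)).ne'
  have hW : t ((q:ℤ)+1+i+2) - t (i+1) ≠ 0 := sub_ne_zero.mpr (by linarith : t (i+1) < t ((q:ℤ)+1+i+2)).ne'
  -- the composition map and local polynomials
  set f : Polynomial ℝ := C ((t (j+1) - t j)⁻¹) * (X - C (t j)) with hfdef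
  set Pc : Polynomial ℝ := ∑ k ∈ Finset.range (q+2), C (b i k) * bernsteinPolynomial ℝ (q+1) k
    with hPcdef
  set Qc : Polynomial ℝ := ∑ k ∈ Finset.range (q+2), C (b (i+1) k) * bernsteinPolynomial ℝ (q+1) k
    with hQcdef
  have hP : Bpoly t n j (q+1) i = Pc.comp f :=
    Bpoly_eq_comp t n (q+1) j hmono hj1 hj2 hspan (b i) i (q+1) (hb i)
  have hQ : Bpoly t n j (q+1) (i+1) = Qc.comp f :=
    Bpoly_eq_comp t n (q+1) j hmono hj1 hj2 hspan (b (i+1)) (i+1) (q+1) (hb (i+1))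
  -- de Boor–Cox and derivative formulas
  have hPrec := Bpoly_rec t n j hj1 hj2' q i
  have hPd := Bpoly_deriv t n (q+1) j hmono hj1 hj2 hspan q le_rfl i
  have hQrec := Bpoly_rec t n j hj1 hj2' q (i+1)
  have hQd := Bpoly_deriv t n (q+1) j hmono hj1 hj2 hspan q le_rfl (i+1)
  rw [show (q:ℤ)+1+(i+1) = (q:ℤ)+1+i+1 from by ring, show (q:ℤ)+1+i+1+1 = (q:ℤ)+1+i+2 from by ring,
    show i+1+1 = i+2 from by ring] at hQrec hQd
  -- the two collapsed identities
  have I1 : ((q : Polynomial ℝ)+1) * Bpoly t n j (q+1) i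
        - (X - C (t i)) * derivative (Bpoly t n j (q+1) i)
      = ((q : Polynomial ℝ)+1) * C ((t ((q:ℤ)+1+i+1) - t (i+1))⁻¹)
          * ((C (t ((q:ℤ)+1+i+1)) - C (t i)) * Bpoly t n j q (i+1)) := by
    linear_combination ((q : Polynomial ℝ)+1) * hPrec - (X - C (t i)) * hPd
  have I2 : ((q : Polynomial ℝ)+1) * Bpoly t n j (q+1) (i+1)
        + (C (t ((q:ℤ)+1+i+2)) - X) * derivative (Bpoly t n j (q+1) (i+1))
      = ((q : Polynomial ℝ)+1) * C ((t ((q:ℤ)+1+i+1) - t (i+1))⁻¹)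
          * ((C (t ((q:ℤ)+1+i+2)) - C (t (i+1))) * Bpoly t n j q (i+1)) := by
    linear_combination ((q : Polynomial ℝ)+1) * hQrec + (C (t ((q:ℤ)+1+i+2)) - X) * hQd
  have master : (C (t ((q:ℤ)+1+i+2)) - C (t (i+1)))
        * (((q : Polynomial ℝ)+1) * Bpoly t n j (q+1) i
            - (X - C (t i)) * derivative (Bpoly t n j (q+1) i))
      = (C (t ((q:ℤ)+1+i+1)) - C (t i))
        * (((q : Polynomial ℝ)+1) * Bpoly t n j (q+1) (i+1)
            + (C (t ((q:ℤ)+1+i+2)) - X) * derivative (Bpoly t n j (q+1) (i+1))) := by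
    linear_combination (C (t ((q:ℤ)+1+i+2)) - C (t (i+1))) * I1
      - (C (t ((q:ℤ)+1+i+1)) - C (t i)) * I2
  rw [hP, hQ] at master
  have hdf : derivative f = C ((t (j+1) - t j)⁻¹) := by
    rw [hfdef]
    simp
  simp only [derivative_comp, hdf] at master
  have hCh : (C (t (j+1)) - C (t j)) * C ((t (j+1) - t j)⁻¹) = (1 : Polynomial ℝ) := by
    rw [← C_sub, ← C_mul, mul_inv_cancel₀ hh0, C_1]
  -- pull everything back through the affine substitution
  have hPhi : ((C (t ((q:ℤ)+1+i+2)) - C (t (i+1)))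
        * ((C (t (j+1)) - C (t j)) * (((q : Polynomial ℝ)+1) * Pc)
            - ((C (t (j+1)) - C (t j)) * X + C (t j) - C (t i)) * derivative Pc)).comp f
      = (C (t (j+1)) - C (t j)) * ((C (t ((q:ℤ)+1+i+2)) - C (t (i+1)))
          * (((q : Polynomial ℝ)+1) * (Pc.comp f)
              - (X - C (t i)) * (C ((t (j+1) - t j)⁻¹) * (derivative Pc).comp f))) := by
    simp only [mul_comp, sub_comp, add_comp, C_comp, X_comp, natCast_comp, one_comp]
    linear_combination ((C (t ((q:ℤ)+1+i+2)) - C (t (i+1))) * ((derivative Pc).comp f)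
      * (C (t j) - C (t i))) * hCh
  have hPsi : ((C (t ((q:ℤ)+1+i+1)) - C (t i))
        * ((C (t (j+1)) - C (t j)) * (((q : Polynomial ℝ)+1) * Qc)
            + (C (t ((q:ℤ)+1+i+2)) - ((C (t (j+1)) - C (t j)) * X + C (t j))) * derivative Qc)).comp f
      = (C (t (j+1)) - C (t j)) * ((C (t ((q:ℤ)+1+i+1)) - C (t i))
          * (((q : Polynomial ℝ)+1) * (Qc.comp f)
              + (C (t ((q:ℤ)+1+i+2)) - X) * (C ((t (j+1) - t j)⁻¹) * (derivative Qc).comp f))) := by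
    simp only [mul_comp, sub_comp, add_comp, C_comp, X_comp, natCast_comp, one_comp]
    linear_combination (-((C (t ((q:ℤ)+1+i+1)) - C (t i)) * ((derivative Qc).comp f)
      * (C (t ((q:ℤ)+1+i+2)) - C (t j)))) * hCh
  have hmaster2 : ((C (t ((q:ℤ)+1+i+2)) - C (t (i+1)))
        * ((C (t (j+1)) - C (t j)) * (((q : Polynomial ℝ)+1) * Pc)
            - ((C (t (j+1)) - C (t j)) * X + C (t j) - C (t i)) * derivative Pc)).comp f
      = ((C (t ((q:ℤ)+1+i+1)) - C (t i))
        * ((C (t (j+1)) - C (t j)) * (((q : Polynomial ℝ)+1) * Qc)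
            + (C (t ((q:ℤ)+1+i+2)) - ((C (t (j+1)) - C (t j)) * X + C (t j))) * derivative Qc)).comp f := by
    rw [hPhi, hPsi, master]
  have hfg : f.comp ((C (t (j+1)) - C (t j)) * X + C (t j)) = X := by
    rw [hfdef]
    simp only [mul_comp, sub_comp, add_comp, C_comp, X_comp]
    linear_combination X * hCh
  have hxw : (C (t ((q:ℤ)+1+i+2)) - C (t (i+1)))
        * ((C (t (j+1)) - C (t j)) * (((q : Polynomial ℝ)+1) * Pc)
            - ((C (t (j+1)) - C (t j)) * X + C (t j) - C (t i)) * derivative Pc)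
      = (C (t ((q:ℤ)+1+i+1)) - C (t i))
        * ((C (t (j+1)) - C (t j)) * (((q : Polynomial ℝ)+1) * Qc)
            + (C (t ((q:ℤ)+1+i+2)) - ((C (t (j+1)) - C (t j)) * X + C (t j))) * derivative Qc) := by
    have hc := congrArg (fun r => r.comp ((C (t (j+1)) - C (t j)) * X + C (t j))) hmaster2
    simpa only [Polynomial.comp_assoc, hfg, comp_X] using hc
  -- Bernstein coefficient world
  have hF1P := bernF1 q (b i)
  have hF2P := bernF2 q (b i)
  have hF1Q := bernF1 q (b (i+1))
  have hF2Q := bernF2 q (b (i+1))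
  rw [← hPcdef] at hF1P hF2P
  rw [← hQcdef] at hF1Q hF2Q
  have hP'x : derivative Pc
      = (((q : Polynomial ℝ)+1) * ∑ k ∈ Finset.range (q+1), C (b i (k+1)) * bernsteinPolynomial ℝ q k)
        - ((q : Polynomial ℝ)+1) * ∑ k ∈ Finset.range (q+1), C (b i k) * bernsteinPolynomial ℝ q k := by
    linear_combination hF2P - hF1P
  have hQ'x : derivative Qc
      = (((q : Polynomial ℝ)+1) * ∑ k ∈ Finset.range (q+1), C (b (i+1) (k+1)) * bernsteinPolynomial ℝ q k)
        - ((q : Polynomial ℝ)+1) * ∑ k ∈ Finset.range (q+1), C (b (i+1) k) * bernsteinPolynomial ℝ q k := by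
    linear_combination hF2Q - hF1Q
  have hkey : ∀ k0, k0 < q + 1 →
      ((q : ℝ) + 1) * ((t ((q:ℤ)+1+i+2) - t (i+1))
          * ((t (j+1) - t j) * b i k0 - (t j - t i) * (b i (k0+1) - b i k0))
        - (t ((q:ℤ)+1+i+1) - t i)
          * ((t (j+1) - t j) * b (i+1) k0 + (t ((q:ℤ)+1+i+2) - t j) * (b (i+1) (k0+1) - b (i+1) k0))) = 0 := by
    apply bern_extract q (q+1) le_rfl
    rw [← sum_merge q (t ((q:ℤ)+1+i+2) - t (i+1)) (t ((q:ℤ)+1+i+1) - t i) (t (j+1) - t j)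
      (t j - t i) (t ((q:ℤ)+1+i+2) - t j) (b i) (b (i+1))]
    simp only [map_sub]
    linear_combination hxw
      - ((C (t ((q:ℤ)+1+i+2)) - C (t (i+1))) * (C (t (j+1)) - C (t j))) * hF1P
      + ((C (t ((q:ℤ)+1+i+2)) - C (t (i+1))) * (C (t j) - C (t i))) * hP'x
      + ((C (t ((q:ℤ)+1+i+1)) - C (t i)) * (C (t (j+1)) - C (t j))) * hF1Q
      + ((C (t ((q:ℤ)+1+i+1)) - C (t i)) * (C (t ((q:ℤ)+1+i+2)) - C (t j))) * hQ'x
  have hq1 : ((q : ℝ) + 1) ≠ 0 := by positivity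
  have hc0 := hkey k (by omega)
  have hc' := (mul_eq_zero.mp hc0).resolve_left hq1
  field_simp
  linear_combination hc'
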